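/- There exist δ0 > 0 and n0 ∈ ℕ such that the following holds for all 0 < δ ≤ δ0 and n ≥ n0. Assume the Setup and the triangle-set definitions, and assume |D̄| ≤ 8δn. Then |ℬ2| ≤ n·|D̄|/3. -/

import Mathlib

open SimpleGraph

/-- The number of triangles (copies of `K₃`) in a graph `G`, i.e. `N(K₃, G)`. -/
noncomputable def triangleCount {V : Type*} (G : SimpleGraph V) : ℕ :=
  Set.ncard {s : Finset V | G.IsNClique 3 s}

/-- `G` contains a subgraph isomorphic to `H`. -/
def Contains {W V : Type*} (H : SimpleGraph W) (G : SimpleGraph V) : Prop :=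
  ∃ f : H →g G, Function.Injective f

/-- `G` is `H`-free: it contains no subgraph isomorphic to `H`. -/
def Free {W V : Type*} (H : SimpleGraph W) (G : SimpleGraph V) : Prop :=
  ¬ Contains H G

/-- The expansion `F^△` of a graph `F`: each edge `uv` of `F` is replaced by a triangle
`u v w_{uv}` where the new vertices `w_{uv}` are pairwise distinct and outside `V(F)`. -/
def expansion {V : Type*} (F : SimpleGraph V) : SimpleGraph (V ⊕ F.edgeSet) :=
  SimpleGraph.fromRel (fun a b =>
    (∃ u v, a = Sum.inl u ∧ b = Sum.inl v ∧ F.Adj u v) ∨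
    (∃ u, ∃ e : F.edgeSet, a = Sum.inl u ∧ b = Sum.inr e ∧ u ∈ (e : Sym2 V)))

/-- `C₄^△`, the expansion of the 4-edge cycle: a graph on 8 vertices. -/
def C4expansion : SimpleGraph ((Fin 4) ⊕ (SimpleGraph.cycleGraph 4).edgeSet) :=
  expansion (SimpleGraph.cycleGraph 4)

/-- The generalized Turán number `ex(n, K₃, H)`: the maximum number of triangles in an
`H`-free graph on `n` vertices. -/
noncomputable def exTriangles (n : ℕ) {W : Type*} (H : SimpleGraph W) : ℕ :=
  sSup {k | ∃ G : SimpleGraph (Fin n), _root_.Free H G ∧ triangleCount G = k}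

/-- `T(n)`: the complete bipartite graph on `Fin n` with parts
`X = {v : v < ⌊n/2⌋}` (of size `⌊n/2⌋`) and `Y = {v : v ≥ ⌊n/2⌋}` (of size `⌈n/2⌉`). -/
def Tgraph (n : ℕ) : SimpleGraph (Fin n) :=
  SimpleGraph.fromRel (fun u v => u.val < n / 2 ∧ n / 2 ≤ v.val)

/-- `T⁺(n)`: the graph `T(n)` with one extra edge (between vertices `0` and `1`) added
inside the part `X`. -/
def TgraphPlus (n : ℕ) : SimpleGraph (Fin n) :=
  SimpleGraph.fromRel (fun u v =>
    (u.val < n / 2 ∧ n / 2 ≤ v.val) ∨ (u.val = 0 ∧ v.val = 1))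

/-- `T⁼(n)`: the graph obtained from `T(n)` by adding the edge `e₁ = {0,1}` inside `X`,
adding the edge `e₂ = {⌊n/2⌋, ⌊n/2⌋+1}` inside `Y`, and deleting the perfect matching
`{0,⌊n/2⌋}, {1,⌊n/2⌋+1}` between the endpoints of `e₁` and of `e₂`. -/
def TgraphEq (n : ℕ) : SimpleGraph (Fin n) :=
  SimpleGraph.fromRel (fun u v =>
    (u.val < n / 2 ∧ n / 2 ≤ v.val ∧
      ¬(u.val = 0 ∧ v.val = n / 2) ∧ ¬(u.val = 1 ∧ v.val = n / 2 + 1))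
    ∨ (u.val = 0 ∧ v.val = 1) ∨ (u.val = n / 2 ∧ v.val = n / 2 + 1))

/-- The join `K₁ ⋈ H` of a single new vertex with the graph `H`. -/
def joinK1 {V : Type*} (H : SimpleGraph V) : SimpleGraph (Option V) :=
  SimpleGraph.fromRel (fun u v =>
    u = none ∨ ∃ a b, u = some a ∧ v = some b ∧ H.Adj a b)

/-- `S(n) = K₁ ⋈ T(n-1)`. -/
def Sgraph (n : ℕ) : SimpleGraph (Option (Fin (n - 1))) := joinK1 (Tgraph (n - 1))

/-- `S⁺(n) = K₁ ⋈ T⁺(n-1)`. -/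
def SgraphPlus (n : ℕ) : SimpleGraph (Option (Fin (n - 1))) := joinK1 (TgraphPlus (n - 1))

/-- `S⁼(n) = K₁ ⋈ T⁼(n-1)`. -/
def SgraphEq (n : ℕ) : SimpleGraph (Option (Fin (n - 1))) := joinK1 (TgraphEq (n - 1))

/-- `d_G(uv)`: the number of triangles of `G` containing the edge `uv`, i.e. the number of
common neighbors of `u` and `v`. -/
noncomputable def edgeTriangleDeg {V : Type*} (G : SimpleGraph V) (u v : V) : ℕ :=
  {w : V | G.Adj u w ∧ G.Adj v w}.ncard

/-- `e_G(A, B)`: the number of edges of `G` with one endpoint in `A` and the other in `B`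
(for disjoint `A`, `B`). -/
noncomputable def crossEdges {V : Type*} (G : SimpleGraph V) (A B : Set V) : ℕ :=
  {p : V × V | p.1 ∈ A ∧ p.2 ∈ B ∧ G.Adj p.1 p.2}.ncard

lemma cyc4_edges : ∀ z ∈ (cycleGraph 4).edgeSet,
    z = s(0,1) ∨ z = s(1,2) ∨ z = s(2,3) ∨ z = s(3,0) := by decide

lemma cyc4_adj : ∀ i j : Fin 4, (cycleGraph 4).Adj i j →
    (i,j) = (0,1) ∨ (i,j) = (1,0) ∨ (i,j) = (1,2) ∨ (i,j) = (2,1) ∨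
    (i,j) = (2,3) ∨ (i,j) = (3,2) ∨ (i,j) = (3,0) ∨ (i,j) = (0,3) := by decide

lemma contains_c4exp {N : Type*} (G : SimpleGraph N) (v0 v1 v2 v3 a0 a1 a2 a3 : N)
    (h01 : G.Adj v0 v1) (h12 : G.Adj v1 v2) (h23 : G.Adj v2 v3) (h30 : G.Adj v3 v0)
    (ha00 : G.Adj a0 v0) (ha01 : G.Adj a0 v1)
    (ha11 : G.Adj a1 v1) (ha12 : G.Adj a1 v2)
    (ha22 : G.Adj a2 v2) (ha23 : G.Adj a2 v3)
    (ha33 : G.Adj a3 v3) (ha30 : G.Adj a3 v0)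
    (d02 : v0 ≠ v2) (d13 : v1 ≠ v3)
    (da01 : a0 ≠ a1) (da02 : a0 ≠ a2) (da03 : a0 ≠ a3)
    (da12 : a1 ≠ a2) (da13 : a1 ≠ a3) (da23 : a2 ≠ a3)
    (e02 : a0 ≠ v2) (e03 : a0 ≠ v3) (e13 : a1 ≠ v3) (e10 : a1 ≠ v0)
    (e20 : a2 ≠ v0) (e21 : a2 ≠ v1) (e31 : a3 ≠ v1) (e32 : a3 ≠ v2) :
    Contains C4expansion G := by
  classical
  set c : Fin 4 → N := fun i => if i = 0 then v0 else if i = 1 then v1 else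
    if i = 2 then v2 else v3 with hc
  have hc0 : c 0 = v0 := by simp [hc]
  have hc1 : c 1 = v1 := by simp [hc]
  have hc2 : c 2 = v2 := by simp [hc]
  have hc3 : c 3 = v3 := by simp [hc]
  set g : Sym2 (Fin 4) → N := fun z =>
    if z = s(0,1) then a0 else if z = s(1,2) then a1 else if z = s(2,3) then a2 else a3
    with hg
  have hgval : ∀ e : (cycleGraph 4).edgeSet,
      (e.val = s(0,1) ∧ g e.val = a0) ∨ (e.val = s(1,2) ∧ g e.val = a1) ∨
      (e.val = s(2,3) ∧ g e.val = a2) ∨ (e.val = s(3,0) ∧ g e.val = a3) := by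
    intro e
    rcases cyc4_edges e.val e.property with h | h | h | h
    · exact Or.inl ⟨h, by simp [hg, h]⟩
    · exact Or.inr (Or.inl ⟨h, by simp [hg, h]⟩)
    · exact Or.inr (Or.inr (Or.inl ⟨h, by simp [hg, h]⟩))
    · exact Or.inr (Or.inr (Or.inr ⟨h, by simp [hg, h]⟩))
  set f : (Fin 4) ⊕ (SimpleGraph.cycleGraph 4).edgeSet → N :=
    Sum.elim c (fun e => g e.val) with hf
  have hapex : ∀ (e : (cycleGraph 4).edgeSet) (i : Fin 4), i ∈ e.val →
      G.Adj (g e.val) (c i) := by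
    intro e i hi
    rcases hgval e with ⟨h, hv⟩ | ⟨h, hv⟩ | ⟨h, hv⟩ | ⟨h, hv⟩ <;>
      rw [h] at hi <;> rw [hv] <;> rcases Sym2.mem_iff.mp hi with rfl | rfl <;>
      simp only [hc0, hc1, hc2, hc3] <;> assumption
  have hcyc : ∀ i j : Fin 4, (cycleGraph 4).Adj i j → G.Adj (c i) (c j) := by
    intro i j hij
    rcases cyc4_adj i j hij with h | h | h | h | h | h | h | h <;>
      (obtain ⟨rfl, rfl⟩ := Prod.mk.injEq .. ▸ h) <;>
      simp only [hc0, hc1, hc2, hc3] <;>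
      first
        | exact h01 | exact h01.symm | exact h12 | exact h12.symm
        | exact h23 | exact h23.symm | exact h30 | exact h30.symm
  have hcinj : Function.Injective c := by
    intro i j hij
    fin_cases i <;> fin_cases j <;> simp [hc0, hc1, hc2, hc3] at hij ⊢ <;>
      first
        | rfl
        | exact absurd hij (G.ne_of_adj h01) | exact absurd hij.symm (G.ne_of_adj h01)
        | exact absurd hij (G.ne_of_adj h12) | exact absurd hij.symm (G.ne_of_adj h12)
        | exact absurd hij (G.ne_of_adj h23) | exact absurd hij.symm (G.ne_of_adj h23)
        | exact absurd hij.symm (G.ne_of_adj h30) | exact absurd hij (G.ne_of_adj h30)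
        | exact absurd hij d02 | exact absurd hij.symm d02
        | exact absurd hij d13 | exact absurd hij.symm d13
  have hgne : ∀ (e : (cycleGraph 4).edgeSet) (i : Fin 4), g e.val ≠ c i := by
    intro e i
    rcases hgval e with ⟨h, hv⟩ | ⟨h, hv⟩ | ⟨h, hv⟩ | ⟨h, hv⟩ <;> rw [hv] <;>
      fin_cases i <;> simp only [hc0, hc1, hc2, hc3] <;>
      first
        | exact G.ne_of_adj ha00 | exact G.ne_of_adj ha01
        | exact G.ne_of_adj ha11 | exact G.ne_of_adj ha12
        | exact G.ne_of_adj ha22 | exact G.ne_of_adj ha23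
        | exact G.ne_of_adj ha33 | exact G.ne_of_adj ha30
        | exact e02 | exact e03 | exact e13 | exact e10
        | exact e20 | exact e21 | exact e31 | exact e32
  have hmap : ∀ {a b}, C4expansion.Adj a b → G.Adj (f a) (f b) := by
    intro a b hab
    simp only [C4expansion, expansion, fromRel_adj] at hab
    obtain ⟨hne, h | h⟩ := hab
    · rcases h with ⟨u, v, rfl, rfl, huv⟩ | ⟨u, e, rfl, rfl, hm⟩
      · exact hcyc u v huv
      · exact (hapex e u hm).symm
    · rcases h with ⟨u, v, rfl, rfl, huv⟩ | ⟨u, e, rfl, rfl, hm⟩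
      · exact (hcyc u v huv).symm
      · exact hapex e u hm
  have hinj : Function.Injective f := by
    intro a b hab
    rcases a with u | e <;> rcases b with v | e'
    · exact congrArg Sum.inl (hcinj hab)
    · exact absurd (hab : c u = g e'.val).symm (hgne e' u)
    · exact absurd (hab : g e.val = c v) (hgne e v)
    · have hab' : g e.val = g e'.val := hab
      have : e.val = e'.val := by
        rcases hgval e with ⟨h, hv⟩ | ⟨h, hv⟩ | ⟨h, hv⟩ | ⟨h, hv⟩ <;>
          rcases hgval e' with ⟨h', hv'⟩ | ⟨h', hv'⟩ | ⟨h', hv'⟩ | ⟨h', hv'⟩ <;>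
          rw [hv, hv'] at hab' <;>
          first
            | (exact h.trans h'.symm)
            | exact absurd hab' da01 | exact absurd hab'.symm da01
            | exact absurd hab' da02 | exact absurd hab'.symm da02
            | exact absurd hab' da03 | exact absurd hab'.symm da03
            | exact absurd hab' da12 | exact absurd hab'.symm da12
            | exact absurd hab' da13 | exact absurd hab'.symm da13
            | exact absurd hab' da23 | exact absurd hab'.symm da23
      exact congrArg Sum.inr (Subtype.ext this)
  exact ⟨⟨f, hmap⟩, hinj⟩

lemma exists_avoid {α : Type*} (S : Set α) (A : Finset α)
    (hA : A.card ≤ 7) (hS : 8 ≤ S.ncard) : ∃ z ∈ S, z ∉ A := by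
  by_contra h
  push_neg at h
  have hsub : S ⊆ ↑A := fun z hz => h z hz
  have := Set.ncard_le_ncard hsub A.finite_toSet
  rw [Set.ncard_coe_finset] at this
  omega


lemma key_config {n : ℕ} {G : SimpleGraph (Fin n)} (hFree : _root_.Free C4expansion G)
    (x w u w' a b : Fin n)
    (hxw : G.Adj x w) (hwu : G.Adj w u) (huw' : G.Adj u w') (hw'x : G.Adj w' x)
    (haw : G.Adj a w) (hau : G.Adj a u) (hbu : G.Adj b u) (hbw' : G.Adj b w')
    (dxu : x ≠ u) (dww' : w ≠ w') (dax : a ≠ x) (daw' : a ≠ w') (dab : a ≠ b)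
    (dbx : b ≠ x) (dbw : b ≠ w)
    (hSw : 8 ≤ {z | G.Adj x z ∧ G.Adj w z}.ncard)
    (hSw' : 8 ≤ {z | G.Adj x z ∧ G.Adj w' z}.ncard) : False := by
  classical
  have hc6 : ({x, w, u, w', a, b} : Finset (Fin n)).card ≤ 7 := by
    have i1 := Finset.card_insert_le x ({w, u, w', a, b} : Finset (Fin n))
    have i2 := Finset.card_insert_le w ({u, w', a, b} : Finset (Fin n))
    have i3 := Finset.card_insert_le u ({w', a, b} : Finset (Fin n))
    have i4 := Finset.card_insert_le w' ({a, b} : Finset (Fin n))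
    have i5 := Finset.card_insert_le a ({b} : Finset (Fin n))
    have i6 := Finset.card_singleton b
    omega
  obtain ⟨z, hzmem, hz⟩ := exists_avoid _ ({x, w, u, w', a, b} : Finset (Fin n)) hc6 hSw
  obtain ⟨hzx, hzw⟩ := hzmem
  have hc7 : (insert z ({x, w, u, w', a, b} : Finset (Fin n))).card ≤ 7 := by
    have := Finset.card_insert_le z ({x, w, u, w', a, b} : Finset (Fin n))
    have h6 : ({x, w, u, w', a, b} : Finset (Fin n)).card ≤ 6 := by
      have i1 := Finset.card_insert_le x ({w, u, w', a, b} : Finset (Fin n))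
      have i2 := Finset.card_insert_le w ({u, w', a, b} : Finset (Fin n))
      have i3 := Finset.card_insert_le u ({w', a, b} : Finset (Fin n))
      have i4 := Finset.card_insert_le w' ({a, b} : Finset (Fin n))
      have i5 := Finset.card_insert_le a ({b} : Finset (Fin n))
      have i6 := Finset.card_singleton b
      omega
    omega
  obtain ⟨z', hz'mem, hz'⟩ := exists_avoid _ _ hc7 hSw'
  obtain ⟨hz'x, hz'w'⟩ := hz'mem
  simp only [Finset.mem_insert, Finset.mem_singleton, not_or] at hz hz'
  obtain ⟨hz1, hz2, hz3, hz4, hz5, hz6⟩ := hz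
  obtain ⟨hz'0, hz'1, hz'2, hz'3, hz'4, hz'5, hz'6⟩ := hz'
  exact hFree (contains_c4exp G x w u w' z a b z'
    hxw hwu huw' hw'x
    hzx.symm hzw.symm haw hau hbu hbw' hz'w'.symm hz'x.symm
    dxu dww'
    hz5 hz6 (Ne.symm hz'0) dab (Ne.symm hz'5) (Ne.symm hz'6)
    hz3 hz4 daw' dax dbx dbw hz'2 hz'3)


lemma pair_dichotomy {α β : Type*} (P : Finset (α × β))
    (hstar : ∀ p ∈ P, ∀ q ∈ P, p.1 ≠ q.1 → p.2 = q.2) :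
    (∀ p ∈ P, ∀ q ∈ P, p.1 = q.1) ∨ (∀ p ∈ P, ∀ q ∈ P, p.2 = q.2) := by
  by_contra hcon
  push_neg at hcon
  obtain ⟨⟨p, hp, q, hq, hpq⟩, ⟨r, hr, t, ht, hrt⟩⟩ := hcon
  have h2 : p.2 = q.2 := hstar p hp q hq hpq
  rcases ne_or_eq r.2 p.2 with h | h
  · have hrp : r.1 = p.1 := by
      by_contra hh; exact h (hstar r hr p hp hh)
    have hrq : r.1 = q.1 := by
      by_contra hh; exact h (by rw [hstar r hr q hq hh, ← h2])
    exact hpq (by rw [← hrp, hrq])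
  · have ht2 : t.2 ≠ p.2 := fun hh => hrt (h.trans hh.symm)
    have htp : t.1 = p.1 := by
      by_contra hh; exact ht2 (hstar t ht p hp hh)
    have htq : t.1 = q.1 := by
      by_contra hh; exact ht2 (by rw [hstar t ht q hq hh, ← h2])
    exact hpq (by rw [← htp, htq])

set_option maxHeartbeats 2000000 in
theorem stmt16 : ∃ δ0 : ℝ, 0 < δ0 ∧ ∃ n0 : ℕ,
    ∀ δ : ℝ, 0 < δ → δ ≤ δ0 → ∀ n : ℕ, n0 ≤ n →
    ∀ G : SimpleGraph (Fin n), _root_.Free C4expansion G →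
    (∀ u v : Fin n, G.Adj u v → ∃ w : Fin n, G.Adj u w ∧ G.Adj v w) →
    ∀ (x : Fin n) (V1 V2 : Set (Fin n)),
    Disjoint V1 V2 → V1 ∪ V2 = {x}ᶜ →
    (∀ W1 W2 : Set (Fin n), Disjoint W1 W2 → W1 ∪ W2 = {x}ᶜ →
      crossEdges G W1 W2 ≤ crossEdges G V1 V2) →
    ((n : ℝ) ^ 2 / 4 - 2 * δ * (n : ℝ) ^ 2 ≤ (crossEdges G V1 V2 : ℝ)) →
    ∀ D : Set (Fin n),
    D = {v : Fin n | v ≠ x ∧ G.Adj v x ∧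
      (n : ℝ) / 200 ≤ (edgeTriangleDeg G v x : ℝ)} →
    ∀ Dbar : Set (Fin n), Dbar = ({x}ᶜ : Set (Fin n)) \ D →
    ((Dbar.ncard : ℝ) ≤ 8 * δ * (n : ℝ)) →
    ∀ S : SimpleGraph (Fin n),
    S = SimpleGraph.fromRel (fun u v => u = x ∨ (u ∈ V1 ∧ v ∈ V2)) →
    ∀ calB2 : Set (Finset (Fin n)),
    calB2 = {s : Finset (Fin n) |
      (G.IsNClique 3 s ∧ ¬ S.IsNClique 3 s) ∧ ((s : Set (Fin n)) ∩ Dbar).ncard = 2} →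
    (calB2.ncard : ℝ) ≤ (n : ℝ) * (Dbar.ncard : ℝ) / 3 := by
  classical
  refine ⟨1/1000, by norm_num, 10000, ?_⟩
  intro δ hδ0 hδ1 n hn G hFree hTri x V1 V2 hdisj hunion hmax hcut D hD Dbar hDbar hDbarcard
    S hS calB2 hB2
  have hn0 : 0 < n := by omega
  have hnR : (10000:ℝ) ≤ (n:ℝ) := by exact_mod_cast hn
  have hnR0 : (0:ℝ) < (n:ℝ) := by linarith
  set sq : ℝ := Real.sqrt (2*δ) with hsq
  have hsq0 : 0 ≤ sq := Real.sqrt_nonneg _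
  have hsq2 : sq^2 = 2*δ := Real.sq_sqrt (by linarith)
  have hsqle : sq ≤ 1/20 := by
    rw [hsq, show (1/20:ℝ) = Real.sqrt ((1/20)^2) from (Real.sqrt_sq (by norm_num)).symm]
    exact Real.sqrt_le_sqrt (by nlinarith)
  have hsqpos : 0 < sq := by rw [hsq]; exact Real.sqrt_pos.mpr (by linarith)
  -- membership basics
  have hxDbar : x ∉ Dbar := by rw [hDbar]; simp
  have hDbar_x : ∀ v ∈ Dbar, v ≠ x := by
    intro v hv; rw [hDbar] at hv; exact hv.1
  have hDbar_nD : ∀ v ∈ Dbar, v ∉ D := by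
    intro v hv; rw [hDbar] at hv; exact hv.2
  have hD_mem : ∀ v : Fin n, v ≠ x → v ∉ Dbar → v ∈ D := by
    intro v h1 h2; rw [hDbar] at h2
    simp only [Set.mem_diff, Set.mem_compl_iff, Set.mem_singleton_iff] at h2
    push_neg at h2; exact h2 h1
  have hD_adj : ∀ w ∈ D, G.Adj w x := by
    intro w hw; rw [hD] at hw; exact hw.2.1
  have hD_ne : ∀ w ∈ D, w ≠ x := by
    intro w hw; rw [hD] at hw; exact hw.1
  have hD_deg : ∀ w ∈ D, 8 ≤ {z | G.Adj x z ∧ G.Adj w z}.ncard := by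
    intro w hw
    have h1 : (n:ℝ)/200 ≤ (edgeTriangleDeg G w x : ℝ) := by rw [hD] at hw; exact hw.2.2
    have heq : {z | G.Adj x z ∧ G.Adj w z} = {z | G.Adj w z ∧ G.Adj x z} := by ext z; simp only [Set.mem_setOf_eq]; tauto
    have h2 : (8:ℝ) ≤ (edgeTriangleDeg G w x : ℝ) := by linarith
    have h3 : 8 ≤ edgeTriangleDeg G w x := by exact_mod_cast h2
    rw [heq]; exact h3
  -- Finsets
  set DbF : Finset (Fin n) := (Set.toFinite Dbar).toFinset with hDbF
  have hDbF_mem : ∀ v, v ∈ DbF ↔ v ∈ Dbar := fun v => Set.Finite.mem_toFinset _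
  have hDbF_coe : (↑DbF : Set (Fin n)) = Dbar := Set.Finite.coe_toFinset _
  have hDbF_card : DbF.card = Dbar.ncard := by
    rw [← hDbF_coe, Set.ncard_coe_finset]
  have hDbF_cardR : (DbF.card : ℝ) ≤ 8*δ*n := by rw [hDbF_card]; exact hDbarcard
  set B2F : Finset (Finset (Fin n)) := (Set.toFinite calB2).toFinset with hB2F
  have hB2F_mem : ∀ s, s ∈ B2F ↔ s ∈ calB2 := fun s => Set.Finite.mem_toFinset _
  have hB2F_card : calB2.ncard = B2F.card := by
    rw [← Set.ncard_coe_finset B2F, Set.Finite.coe_toFinset]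
  have hB2spec : ∀ s ∈ B2F, G.IsNClique 3 s ∧ (s ∩ DbF).card = 2 := by
    intro s hs
    rw [hB2F_mem, hB2] at hs
    obtain ⟨⟨h1, _⟩, h2⟩ := hs
    refine ⟨h1, ?_⟩
    have he : ((s:Set (Fin n)) ∩ Dbar) = ↑(s ∩ DbF) := by rw [Finset.coe_inter, hDbF_coe]
    rw [he, Set.ncard_coe_finset] at h2
    exact h2
  -- the per-vertex bound
  have hkey : ∀ u ∈ DbF, ((B2F.filter (fun s => u ∈ s)).card : ℝ)
      ≤ 8*δ*n + (n/2 + 2*sq*n) := by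
    intro u hu
    have huDbar : u ∈ Dbar := (hDbF_mem u).1 hu
    have hux : u ≠ x := hDbar_x u huDbar
    have huD : u ∉ D := hDbar_nD u huDbar
    set Tu := B2F.filter (fun s => u ∈ s) with hTu
    set TuX := Tu.filter (fun s => x ∈ s) with hTuX
    set TuD := Tu.filter (fun s => x ∉ s) with hTuDdef
    have hsplit : TuX.card + TuD.card = Tu.card :=
      Finset.card_filter_add_card_filter_not _
    set d0 : Fin n := ⟨0, hn0⟩ with hd0
    set vOf : Finset (Fin n) → Fin n := fun s => WithBot.unbotD d0 (((s ∩ DbF).erase u).max) with hvOf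
    set wOf : Finset (Fin n) → Fin n := fun s => WithBot.unbotD d0 ((s \ DbF).max) with hwOf
    have hclique : ∀ s ∈ Tu, G.IsNClique 3 s :=
      fun s hs => (hB2spec s (Finset.mem_filter.mp hs).1).1
    have hcard3 : ∀ s ∈ Tu, s.card = 3 := fun s hs => (hclique s hs).2
    have hadj : ∀ s ∈ Tu, ∀ a ∈ s, ∀ b ∈ s, a ≠ b → G.Adj a b := by
      intro s hs a ha b hb hab
      exact (hclique s hs).1 ha hb hab
    have hus : ∀ s ∈ Tu, u ∈ s := fun s hs => (Finset.mem_filter.mp hs).2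
    have hcard2 : ∀ s ∈ Tu, (s ∩ DbF).card = 2 :=
      fun s hs => (hB2spec s (Finset.mem_filter.mp hs).1).2
    have hvspec : ∀ s ∈ Tu, (s ∩ DbF).erase u = {vOf s} := by
      intro s hs
      have huin : u ∈ s ∩ DbF := Finset.mem_inter.mpr ⟨hus s hs, hu⟩
      have h1 : ((s ∩ DbF).erase u).card = 1 := by
        rw [Finset.card_erase_of_mem huin, hcard2 s hs]
      obtain ⟨v, hv⟩ := Finset.card_eq_one.mp h1
      have : vOf s = v := by
        simp only [hvOf]; rw [hv, Finset.max_singleton, WithBot.unbotD_coe]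
      rw [this, hv]
    have hvmem : ∀ s ∈ Tu, vOf s ∈ s ∧ vOf s ∈ DbF ∧ vOf s ≠ u := by
      intro s hs
      have h := hvspec s hs
      have hm : vOf s ∈ (s ∩ DbF).erase u := by
        rw [h]; exact Finset.mem_singleton_self _
      exact ⟨(Finset.mem_inter.mp (Finset.mem_of_mem_erase hm)).1,
             (Finset.mem_inter.mp (Finset.mem_of_mem_erase hm)).2,
             Finset.ne_of_mem_erase hm⟩
    have hwspec : ∀ s ∈ TuD, s \ DbF = {wOf s} := by
      intro s hs
      have hsTu : s ∈ Tu := (Finset.mem_filter.mp hs).1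
      have h1 : (s \ DbF).card = 1 := by
        have h2 := hcard2 s hsTu
        have h3 := hcard3 s hsTu
        have h4 := Finset.card_inter_add_card_sdiff s DbF
        omega
      obtain ⟨w, hw⟩ := Finset.card_eq_one.mp h1
      have : wOf s = w := by
        simp only [hwOf]; rw [hw, Finset.max_singleton, WithBot.unbotD_coe]
      rw [this, hw]
    have hwmem : ∀ s ∈ TuD, wOf s ∈ s ∧ wOf s ∈ D := by
      intro s hs
      have hsTu : s ∈ Tu := (Finset.mem_filter.mp hs).1
      have hxs : x ∉ s := (Finset.mem_filter.mp hs).2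
      have hm : wOf s ∈ s \ DbF := by
        rw [hwspec s hs]; exact Finset.mem_singleton_self _
      have h1 : wOf s ∈ s := (Finset.mem_sdiff.mp hm).1
      have h2 : wOf s ∉ DbF := (Finset.mem_sdiff.mp hm).2
      have h3 : wOf s ≠ x := fun h => hxs (h ▸ h1)
      exact ⟨h1, hD_mem _ h3 (fun hh => h2 ((hDbF_mem _).2 hh))⟩
    have hwnotDbF : ∀ s ∈ TuD, wOf s ∉ DbF := by
      intro s hs
      intro hcon
      exact hDbar_nD _ ((hDbF_mem _).1 hcon) (hwmem s hs).2
    have hs_eqD : ∀ s ∈ TuD, s = {u, vOf s, wOf s} := by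
      intro s hs
      have hsTu : s ∈ Tu := (Finset.mem_filter.mp hs).1
      obtain ⟨hv1, hv2, hv3⟩ := hvmem s hsTu
      obtain ⟨hw1, hw3⟩ := hwmem s hs
      have hw2 : wOf s ∉ DbF := hwnotDbF s hs
      have hvw : vOf s ≠ wOf s := fun h => hw2 (h ▸ hv2)
      have huw : u ≠ wOf s := fun h => hw2 (h ▸ hu)
      have hsub : ({u, vOf s, wOf s} : Finset (Fin n)) ⊆ s := by
        intro a ha
        simp only [Finset.mem_insert, Finset.mem_singleton] at ha
        rcases ha with rfl | rfl | rfl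
        exacts [hus s hsTu, hv1, hw1]
      have hcardi : ({u, vOf s, wOf s} : Finset (Fin n)).card = 3 := by
        rw [Finset.card_insert_of_notMem (by simp [Ne.symm hv3, huw]),
          Finset.card_insert_of_notMem (by simp [hvw]), Finset.card_singleton]
      exact (Finset.eq_of_subset_of_card_le hsub (by rw [hcard3 s hsTu, hcardi])).symm
    -- TuX bound
    have hTuXcard : TuX.card ≤ DbF.card := by
      have hx_eq : ∀ t ∈ TuX, t = {x, u, vOf t} := by
        intro t ht
        have htTu : t ∈ Tu := (Finset.mem_filter.mp ht).1
        have hxt : x ∈ t := (Finset.mem_filter.mp ht).2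
        obtain ⟨hv1, hv2, hv3⟩ := hvmem t htTu
        have h1 : x ≠ u := Ne.symm hux
        have h2 : x ≠ vOf t := fun h => hxDbar ((hDbF_mem _).1 (h ▸ hv2))
        have hsub : ({x, u, vOf t} : Finset (Fin n)) ⊆ t := by
          intro a ha
          simp only [Finset.mem_insert, Finset.mem_singleton] at ha
          rcases ha with rfl | rfl | rfl
          exacts [hxt, hus t htTu, hv1]
        have hcardi : ({x, u, vOf t} : Finset (Fin n)).card = 3 := by
          rw [Finset.card_insert_of_notMem (by simp [h1, h2]),
            Finset.card_insert_of_notMem (by simp [Ne.symm hv3]), Finset.card_singleton]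
        exact (Finset.eq_of_subset_of_card_le hsub (by rw [hcard3 t htTu, hcardi])).symm
      apply Finset.card_le_card_of_injOn vOf
      · intro s hs
        exact (hvmem s (Finset.mem_filter.mp hs).1).2.1
      · intro s hs s' hs' heq
        simp only [Finset.mem_coe] at hs hs'
        rw [hx_eq s hs, hx_eq s' hs', heq]
    -- TuD bound
    set ψ : Finset (Fin n) → Fin n × Fin n := fun s => (vOf s, wOf s) with hψ
    have hψinj : Set.InjOn ψ ↑TuD := by
      intro s hs s' hs' heq
      simp only [Finset.mem_coe] at hs hs'
      have h1 : vOf s = vOf s' := congrArg Prod.fst heq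
      have h2 : wOf s = wOf s' := congrArg Prod.snd heq
      rw [hs_eqD s hs, hs_eqD s' hs', h1, h2]
    set PiF := TuD.image ψ with hPiF
    have hPicard : TuD.card = PiF.card := (Finset.card_image_of_injOn hψinj).symm
    have hstar : ∀ p ∈ PiF, ∀ q ∈ PiF, p.1 ≠ q.1 → p.2 = q.2 := by
      intro p hp q hq h1
      by_contra h2
      obtain ⟨s, hs, rfl⟩ := Finset.mem_image.mp hp
      obtain ⟨s', hs', rfl⟩ := Finset.mem_image.mp hq
      simp only [hψ] at h1 h2
      have hsTu : s ∈ Tu := (Finset.mem_filter.mp hs).1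
      have hs'Tu : s' ∈ Tu := (Finset.mem_filter.mp hs').1
      obtain ⟨hv1, hv2, hv3⟩ := hvmem s hsTu
      obtain ⟨hw1, hw3⟩ := hwmem s hs
      obtain ⟨hv1', hv2', hv3'⟩ := hvmem s' hs'Tu
      obtain ⟨hw1', hw3'⟩ := hwmem s' hs'
      have hvD : vOf s ∈ Dbar := (hDbF_mem _).1 hv2
      have hvD' : vOf s' ∈ Dbar := (hDbF_mem _).1 hv2'
      have hwu : wOf s ≠ u := fun h => (hwnotDbF s hs) (h ▸ hu)
      have hwu' : wOf s' ≠ u := fun h => (hwnotDbF s' hs') (h ▸ hu)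
      have hvw : vOf s ≠ wOf s := fun h => (hwnotDbF s hs) (h ▸ hv2)
      have hvw' : vOf s' ≠ wOf s' := fun h => (hwnotDbF s' hs') (h ▸ hv2')
      exact key_config hFree x (wOf s) u (wOf s') (vOf s) (vOf s')
        (hD_adj _ hw3).symm
        (hadj s hsTu _ hw1 u (hus s hsTu) hwu)
        (hadj s' hs'Tu u (hus s' hs'Tu) _ hw1' (Ne.symm hwu'))
        (hD_adj _ hw3')
        (hadj s hsTu _ hv1 _ hw1 hvw)
        (hadj s hsTu _ hv1 u (hus s hsTu) hv3)
        (hadj s' hs'Tu _ hv1' u (hus s' hs'Tu) hv3')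
        (hadj s' hs'Tu _ hv1' _ hw1' hvw')
        (Ne.symm hux) h2
        (hDbar_x _ hvD)
        (fun h => hDbar_nD _ hvD (by rw [h]; exact hw3'))
        h1
        (hDbar_x _ hvD')
        (fun h => hDbar_nD _ hvD' (by rw [h]; exact hw3))
        (hD_deg _ hw3) (hD_deg _ hw3')
    have hTuDcard : (TuD.card : ℝ) ≤ n/2 + 2*sq*n := by
      rcases pair_dichotomy PiF hstar with hall1 | hall2
      swap
      · -- all snd equal: fst injective into DbF
        have hfstinj : Set.InjOn (Prod.fst : Fin n × Fin n → Fin n) ↑PiF := by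
          intro p hp q hq h
          simp only [Finset.mem_coe] at hp hq
          exact Prod.ext h (hall2 p hp q hq)
        have h1 : PiF.card ≤ DbF.card := by
          apply Finset.card_le_card_of_injOn Prod.fst _ hfstinj
          intro p hp
          obtain ⟨s, hs, rfl⟩ := Finset.mem_image.mp hp
          exact (hvmem s (Finset.mem_filter.mp hs).1).2.1
        have h2 : (TuD.card:ℝ) ≤ (DbF.card:ℝ) := by
          rw [hPicard]; exact_mod_cast h1
        nlinarith [hDbF_cardR]
      · -- all fst equal
        rcases Finset.eq_empty_or_nonempty TuD with he | ⟨s₀, hs₀⟩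
        · rw [he]
          simp only [Finset.card_empty, Nat.cast_zero]
          positivity
        · have hs₀Tu : s₀ ∈ Tu := (Finset.mem_filter.mp hs₀).1
          set v₀ : Fin n := vOf s₀ with hv₀def
          obtain ⟨hv₀1, hv₀2, hv₀3⟩ := hvmem s₀ hs₀Tu
          have hv₀Dbar : v₀ ∈ Dbar := (hDbF_mem _).1 hv₀2
          have huv₀ : G.Adj u v₀ := hadj s₀ hs₀Tu u (hus s₀ hs₀Tu) _ hv₀1 (Ne.symm hv₀3)
          have hfsteq : ∀ s ∈ TuD, vOf s = v₀ := by
            intro s hs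
            exact hall1 (ψ s) (Finset.mem_image_of_mem ψ hs) (ψ s₀)
              (Finset.mem_image_of_mem ψ hs₀)
          set P : Finset (Fin n) :=
            Finset.univ.filter (fun w => w ∈ D ∧ G.Adj u w ∧ G.Adj v₀ w) with hP
          have hPspec : ∀ w ∈ P, w ∈ D ∧ G.Adj u w ∧ G.Adj v₀ w :=
            fun w hw => (Finset.mem_filter.mp hw).2
          have hsndinj : Set.InjOn (Prod.snd : Fin n × Fin n → Fin n) ↑PiF := by
            intro p hp q hq h
            simp only [Finset.mem_coe] at hp hq
            exact Prod.ext (hall1 p hp q hq) h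
          have hTP : TuD.card ≤ P.card := by
            rw [hPicard]
            apply Finset.card_le_card_of_injOn Prod.snd _ hsndinj
            intro p hp
            obtain ⟨s, hs, rfl⟩ := Finset.mem_image.mp hp
            obtain ⟨hw1, hw3⟩ := hwmem s hs
            have hsTu : s ∈ Tu := (Finset.mem_filter.mp hs).1
            have huw : u ≠ wOf s := fun h => (hwnotDbF s hs) (by rw [← h]; exact hu)
            have hvw : vOf s ≠ wOf s :=
              fun h => (hwnotDbF s hs) (by rw [← h]; exact (hvmem s hsTu).2.1)
            show wOf s ∈ P
            refine Finset.mem_filter.mpr ⟨Finset.mem_univ _, hw3, ?_, ?_⟩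
            · exact hadj s hsTu u (hus s hsTu) _ hw1 huw
            · rw [← hfsteq s hs]
              exact hadj s hsTu _ (hvmem s hsTu).1 _ hw1 hvw
          have hPbound : (P.card : ℝ) ≤ n/2 + 2*sq*n := by
            by_cases huxadj : G.Adj u x
            · have hsub2 : (↑P : Set (Fin n)) ⊆ {z | G.Adj u z ∧ G.Adj x z} := by
                intro w hw
                obtain ⟨h1, h2, h3⟩ := hPspec w (Finset.mem_coe.mp hw)
                exact ⟨h2, (hD_adj w h1).symm⟩
              have hn1 : P.card ≤ {z | G.Adj u z ∧ G.Adj x z}.ncard := by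
                have := Set.ncard_le_ncard hsub2 (Set.toFinite _)
                rwa [Set.ncard_coe_finset] at this
              have hdlt : (edgeTriangleDeg G u x : ℝ) < n/200 := by
                by_contra hge
                push_neg at hge
                exact huD (by rw [hD]; exact ⟨hux, huxadj, hge⟩)
              have hn2 : (P.card : ℝ) ≤ (edgeTriangleDeg G u x : ℝ) := by
                exact_mod_cast hn1
              nlinarith
            · by_cases hvxadj : G.Adj v₀ x
              · have hv₀D : v₀ ∉ D := hDbar_nD _ hv₀Dbar
                have hsub2 : (↑P : Set (Fin n)) ⊆ {z | G.Adj v₀ z ∧ G.Adj x z} := by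
                  intro w hw
                  obtain ⟨h1, h2, h3⟩ := hPspec w (Finset.mem_coe.mp hw)
                  exact ⟨h3, (hD_adj w h1).symm⟩
                have hn1 : P.card ≤ {z | G.Adj v₀ z ∧ G.Adj x z}.ncard := by
                  have := Set.ncard_le_ncard hsub2 (Set.toFinite _)
                  rwa [Set.ncard_coe_finset] at this
                have hdlt : (edgeTriangleDeg G v₀ x : ℝ) < n/200 := by
                  by_contra hge
                  push_neg at hge
                  exact hv₀D (by rw [hD]; exact ⟨hDbar_x _ hv₀Dbar, hvxadj, hge⟩)
                have hn2 : (P.card : ℝ) ≤ (edgeTriangleDeg G v₀ x : ℝ) := by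
                  exact_mod_cast hn1
                nlinarith
              · by_cases hP3 : P.card ≤ 2
                · have h2 : (P.card : ℝ) ≤ 2 := by exact_mod_cast hP3
                  nlinarith
                · push_neg at hP3
                  have hind : ∀ w ∈ P, ∀ w' ∈ P, w ≠ w' → ¬ G.Adj w w' := by
                    intro w hw w' hw' hne hadj'
                    obtain ⟨hwD, hwu, hwv⟩ := hPspec w hw
                    obtain ⟨hw'D, hw'u, hw'v⟩ := hPspec w' hw'
                    have hw'P : w' ∈ P.erase w := Finset.mem_erase.mpr ⟨Ne.symm hne, hw'⟩
                    have hcarde : 1 ≤ ((P.erase w).erase w').card := by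
                      rw [Finset.card_erase_of_mem hw'P, Finset.card_erase_of_mem hw]
                      omega
                    obtain ⟨w'', hw''⟩ := Finset.card_pos.mp hcarde
                    have hw''P : w'' ∈ P :=
                      Finset.mem_of_mem_erase (Finset.mem_of_mem_erase hw'')
                    have hw''w' : w'' ≠ w' := Finset.ne_of_mem_erase hw''
                    have hw''w : w'' ≠ w :=
                      Finset.ne_of_mem_erase (Finset.mem_of_mem_erase hw'')
                    obtain ⟨hw''D, hw''u, hw''v⟩ := hPspec w'' hw''P
                    exact key_config hFree x w u w'' w' v₀
                      (hD_adj w hwD).symm hwu.symm hw''u (hD_adj w'' hw''D)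
                      hadj'.symm hw'u.symm huv₀.symm hw''v
                      (Ne.symm hux) (Ne.symm hw''w)
                      (hD_ne w' hw'D) (Ne.symm hw''w')
                      (fun h => hDbar_nD v₀ hv₀Dbar (h ▸ hw'D))
                      (hDbar_x _ hv₀Dbar)
                      (fun h => hDbar_nD v₀ hv₀Dbar (by rw [h]; exact hwD))
                      (hD_deg w hwD) (hD_deg w'' hw''D)
                  -- cut argument
                  set P1 := P.filter (fun w => w ∈ V1) with hP1
                  set P2 := P.filter (fun w => w ∈ V2) with hP2
                  have hPsub12 : P ⊆ P1 ∪ P2 := by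
                    intro w hw
                    have hwD := (hPspec w hw).1
                    have hmem : w ∈ V1 ∪ V2 := by
                      rw [hunion]
                      simp only [Set.mem_compl_iff, Set.mem_singleton_iff]
                      exact hD_ne w hwD
                    rcases hmem with h | h
                    · exact Finset.mem_union_left _ (Finset.mem_filter.mpr ⟨hw, h⟩)
                    · exact Finset.mem_union_right _ (Finset.mem_filter.mpr ⟨hw, h⟩)
                  have hPcard12 : P.card ≤ P1.card + P2.card :=
                    le_trans (Finset.card_le_card hPsub12) (Finset.card_union_le _ _)
                  set V1F := (Set.toFinite V1).toFinset with hV1F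
                  set V2F := (Set.toFinite V2).toFinset with hV2F
                  have hV1F_mem : ∀ v, v ∈ V1F ↔ v ∈ V1 := fun v => Set.Finite.mem_toFinset _
                  have hV2F_mem : ∀ v, v ∈ V2F ↔ v ∈ V2 := fun v => Set.Finite.mem_toFinset _
                  set EF := Finset.univ.filter
                    (fun p : Fin n × Fin n => p.1 ∈ V1 ∧ p.2 ∈ V2 ∧ G.Adj p.1 p.2) with hEF
                  have hcutEF : crossEdges G V1 V2 = EF.card := by
                    have hseteq : {p : Fin n × Fin n | p.1 ∈ V1 ∧ p.2 ∈ V2 ∧ G.Adj p.1 p.2}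
                        = ↑EF := by
                      ext p
                      simp [hEF]
                    rw [crossEdges, hseteq, Set.ncard_coe_finset]
                  have hEsub : EF ⊆ (V1F ×ˢ V2F) \ (P1 ×ˢ P2) := by
                    intro p hp
                    obtain ⟨h1, h2, h3⟩ := (Finset.mem_filter.mp hp).2
                    refine Finset.mem_sdiff.mpr ⟨Finset.mem_product.mpr
                      ⟨(hV1F_mem _).2 h1, (hV2F_mem _).2 h2⟩, ?_⟩
                    intro hcon
                    obtain ⟨hc1, hc2⟩ := Finset.mem_product.mp hcon
                    exact hind p.1 (Finset.mem_filter.mp hc1).1 p.2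
                      (Finset.mem_filter.mp hc2).1 (G.ne_of_adj h3) h3
                  have hPprodsub : P1 ×ˢ P2 ⊆ V1F ×ˢ V2F := by
                    intro p hp
                    obtain ⟨hc1, hc2⟩ := Finset.mem_product.mp hp
                    exact Finset.mem_product.mpr
                      ⟨(hV1F_mem _).2 (Finset.mem_filter.mp hc1).2,
                       (hV2F_mem _).2 (Finset.mem_filter.mp hc2).2⟩
                  have hcount : EF.card ≤ V1F.card * V2F.card - P1.card * P2.card := by
                    calc EF.card ≤ ((V1F ×ˢ V2F) \ (P1 ×ˢ P2)).card :=
                          Finset.card_le_card hEsub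
                      _ = (V1F ×ˢ V2F).card - (P1 ×ˢ P2).card := Finset.card_sdiff_of_subset hPprodsub
                      _ = V1F.card * V2F.card - P1.card * P2.card := by
                          rw [Finset.card_product, Finset.card_product]
                  have hprodle : P1.card * P2.card ≤ V1F.card * V2F.card := by
                    rw [← Finset.card_product, ← Finset.card_product]
                    exact Finset.card_le_card hPprodsub
                  set a1 : ℝ := (V1F.card : ℝ) with ha1def
                  set b1 : ℝ := (V2F.card : ℝ) with hb1def
                  set p1 : ℝ := (P1.card : ℝ) with hp1def
                  set p2 : ℝ := (P2.card : ℝ) with hp2def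
                  have ha1n : 0 ≤ a1 := by rw [ha1def]; exact Nat.cast_nonneg _
                  have hb1n : 0 ≤ b1 := by rw [hb1def]; exact Nat.cast_nonneg _
                  have hp1n : 0 ≤ p1 := by rw [hp1def]; exact Nat.cast_nonneg _
                  have hp2n : 0 ≤ p2 := by rw [hp2def]; exact Nat.cast_nonneg _
                  have hcutR : (n:ℝ)^2/4 - 2*δ*n^2 ≤ a1*b1 - p1*p2 := by
                    have h2 : ((EF.card:ℕ):ℝ)
                        ≤ ((V1F.card * V2F.card - P1.card * P2.card : ℕ):ℝ) := by
                      exact_mod_cast hcount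
                    rw [Nat.cast_sub hprodle] at h2
                    push_cast at h2
                    rw [hcutEF] at hcut
                    calc (n:ℝ)^2/4 - 2*δ*n^2 ≤ ((EF.card:ℕ):ℝ) := hcut
                      _ ≤ a1*b1 - p1*p2 := by
                          rw [ha1def, hb1def, hp1def, hp2def]; exact h2
                  have hab : a1 + b1 = (n:ℝ) - 1 := by
                    have h1 : (V1 ∪ V2).ncard = V1.ncard + V2.ncard :=
                      Set.ncard_union_eq hdisj (Set.toFinite _) (Set.toFinite _)
                    rw [hunion] at h1
                    have h2 : ({x} : Set (Fin n)).ncard + ({x}ᶜ : Set (Fin n)).ncard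
                        = Nat.card (Fin n) := Set.ncard_add_ncard_compl _
                    rw [Set.ncard_singleton, Nat.card_eq_fintype_card, Fintype.card_fin] at h2
                    have h3 : V1.ncard + V2.ncard = n - 1 := by omega
                    have h4 : V1F.card = V1.ncard := by
                      rw [← Set.ncard_coe_finset V1F, hV1F]
                      rw [Set.Finite.coe_toFinset]
                    have h5 : V2F.card = V2.ncard := by
                      rw [← Set.ncard_coe_finset V2F, hV2F]
                      rw [Set.Finite.coe_toFinset]
                    rw [ha1def, hb1def, h4, h5]
                    have h6 : 1 ≤ n := hn0
                    have h7 : ((V1.ncard + V2.ncard : ℕ) : ℝ) = ((n - 1 : ℕ) : ℝ) := by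
                      exact_mod_cast congrArg (fun k : ℕ => (k : ℝ)) h3
                    push_cast [Nat.cast_sub h6] at h7
                    linarith [h7]
                  have hA1B1 : (n:ℝ)^2/4 - 2*δ*n^2 ≤ a1*b1 := by nlinarith
                  have hp1p2 : p1*p2 ≤ 2*δ*(n:ℝ)^2 := by nlinarith [sq_nonneg (a1 - b1)]
                  have ha1b : a1 ≤ (n:ℝ)/2 + sq*n := by
                    nlinarith [hA1B1, hab, hsq2, mul_nonneg hsq0 (le_of_lt hnR0),
                      sq_nonneg (a1 - b1), sq_nonneg (a1 - b1 - 2*sq*n)]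
                  have hb1b : b1 ≤ (n:ℝ)/2 + sq*n := by
                    nlinarith [hA1B1, hab, hsq2, mul_nonneg hsq0 (le_of_lt hnR0),
                      sq_nonneg (a1 - b1), sq_nonneg (b1 - a1 - 2*sq*n)]
                  have hPle : (P.card:ℝ) ≤ p1 + p2 := by
                    rw [hp1def, hp2def]
                    exact_mod_cast hPcard12
                  rcases le_or_gt p1 (sq*n) with hc | hc
                  · have hp2b : p2 ≤ b1 := by
                      rw [hp2def, hb1def]
                      have : P2 ⊆ V2F := by
                        intro w hw
                        exact (hV2F_mem _).2 (Finset.mem_filter.mp hw).2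
                      exact_mod_cast Finset.card_le_card this
                    linarith
                  · have hp2c : p2 ≤ sq*n := by
                      nlinarith [hp1p2, hsq2, mul_pos hsqpos hnR0]
                    have hp1b : p1 ≤ a1 := by
                      rw [hp1def, ha1def]
                      have : P1 ⊆ V1F := by
                        intro w hw
                        exact (hV1F_mem _).2 (Finset.mem_filter.mp hw).2
                      exact_mod_cast Finset.card_le_card this
                    linarith
          calc (TuD.card : ℝ) ≤ (P.card : ℝ) := by exact_mod_cast hTP
            _ ≤ n/2 + 2*sq*n := hPbound
    -- combine
    have hX : (TuX.card : ℝ) ≤ 8*δ*n := le_trans (by exact_mod_cast hTuXcard) hDbF_cardR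
    have : (Tu.card : ℝ) = (TuX.card : ℝ) + (TuD.card : ℝ) := by
      rw [← hsplit]; push_cast; ring
    rw [hTu] at *
    linarith [hTuDcard]
  -- double counting
  have hdouble : ∑ u ∈ DbF, (B2F.filter (fun s => u ∈ s)).card = 2 * B2F.card := by
    have h1 : ∀ s ∈ B2F, (DbF.filter (fun u => u ∈ s)).card = 2 := by
      intro s hs
      have := (hB2spec s hs).2
      rwa [Finset.inter_comm, ← Finset.filter_mem_eq_inter] at this
    calc ∑ u ∈ DbF, (B2F.filter (fun s => u ∈ s)).card
        = ∑ u ∈ DbF, ∑ s ∈ B2F, if u ∈ s then 1 else 0 := by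
          refine Finset.sum_congr rfl fun u _ => ?_
          rw [Finset.card_filter]
      _ = ∑ s ∈ B2F, ∑ u ∈ DbF, if u ∈ s then 1 else 0 := Finset.sum_comm
      _ = ∑ s ∈ B2F, (DbF.filter (fun u => u ∈ s)).card := by
          refine Finset.sum_congr rfl fun s _ => ?_
          rw [Finset.card_filter]
      _ = ∑ s ∈ B2F, 2 := Finset.sum_congr rfl h1
      _ = 2 * B2F.card := by rw [Finset.sum_const, smul_eq_mul, mul_comm]
  -- combine
  have hsum : (2 * B2F.card : ℝ) ≤ (DbF.card : ℝ) * (8*δ*n + (n/2 + 2*sq*n)) := by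
    have h1 : ((∑ u ∈ DbF, (B2F.filter (fun s => u ∈ s)).card : ℕ) : ℝ)
        = ∑ u ∈ DbF, ((B2F.filter (fun s => u ∈ s)).card : ℝ) := by push_cast; ring_nf
    have h2 : ∑ u ∈ DbF, ((B2F.filter (fun s => u ∈ s)).card : ℝ)
        ≤ ∑ _u ∈ DbF, (8*δ*n + (n/2 + 2*sq*n)) := Finset.sum_le_sum hkey
    rw [Finset.sum_const, nsmul_eq_mul] at h2
    calc (2 * B2F.card : ℝ) = ((2 * B2F.card : ℕ) : ℝ) := by push_cast; ring
      _ = ((∑ u ∈ DbF, (B2F.filter (fun s => u ∈ s)).card : ℕ) : ℝ) := by rw [hdouble]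
      _ = ∑ u ∈ DbF, ((B2F.filter (fun s => u ∈ s)).card : ℝ) := h1
      _ ≤ (DbF.card : ℝ) * (8*δ*n + (n/2 + 2*sq*n)) := h2
  rw [hB2F_card]
  rw [← hDbF_card]
  have hDb0 : (0:ℝ) ≤ (DbF.card : ℝ) := by positivity
  nlinarith [hsum, hsqle, hδ1, hδ0, hnR0, hDb0,
    mul_le_mul_of_nonneg_left hsqle hDb0]
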